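/- Let (C_j, f_k^j) be an exact n-gon over 𝔽₂ in which each C_j is ℤ/2-graded with each differential d_j of odd degree, and such that f_k^j has degree k - j - 1 (mod 2) whenever 0 ≤ j < k ≤ n-1. Then Σ_{j=0}^{n-1} (-1)^j χ(C_j) = 0, where χ(C_j) denotes the Euler characteristic of the finite-dimensional ℤ/2-graded complex C_j. -/

import Mathlib

set_option linter.unusedSectionVars false
set_option linter.unusedVariables false
set_option maxHeartbeats 1000000
open LinearMap Finset Module

lemma add_self2 {W : Type*} [AddCommGroup W] [Module (ZMod 2) W] (x : W) : x + x = 0 := by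
  rw [← two_smul (ZMod 2) x, show (2 : ZMod 2) = 0 from rfl, zero_smul]

lemma eq_add_of_add_eq2 {W : Type*} [AddCommGroup W] [Module (ZMod 2) W] {a b c : W}
    (h : a + b = c) : a = c + b := by
  rw [← h, add_assoc, add_self2, add_zero]

section Idem
variable {W : Type*} [AddCommGroup W] [Module (ZMod 2) W] (eW : W →ₗ[ZMod 2] W)

lemma range_id_add (he : eW ∘ₗ eW = eW) : LinearMap.range (LinearMap.id + eW) = LinearMap.ker eW := by
  have heapp : ∀ x, eW (eW x) = eW x := fun x => LinearMap.congr_fun he x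
  apply le_antisymm
  · rintro x ⟨y, rfl⟩
    simp only [LinearMap.mem_ker, LinearMap.add_apply, LinearMap.id_apply, map_add, heapp,
      add_self2]
  · intro x hx
    exact ⟨x, by simp [LinearMap.mem_ker.mp hx]⟩

lemma ker_id_add (he : eW ∘ₗ eW = eW) : LinearMap.ker (LinearMap.id + eW) = LinearMap.range eW := by
  have heapp : ∀ x, eW (eW x) = eW x := fun x => LinearMap.congr_fun he x
  apply le_antisymm
  · intro x hx
    have h1 : x + eW x = 0 := LinearMap.mem_ker.mp hx
    have h2 : x = eW x := by
      have := eq_add_of_add_eq2 h1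
      simpa using this
    exact ⟨x, h2.symm⟩
  · rintro x ⟨y, rfl⟩
    simp only [LinearMap.mem_ker, LinearMap.add_apply, LinearMap.id_apply, heapp, add_self2]
end Idem

section Key
variable {V : Type} [AddCommGroup V] [Module (ZMod 2) V]

lemma ker_eq_range_of_homotopy (D K N : V →ₗ[ZMod 2] V) (m : ℕ)
    (hD2 : D ∘ₗ D = 0) (hN : N ^ m = 0) (hND : N * D = D * N)
    (hhtp : D ∘ₗ K + K ∘ₗ D = LinearMap.id + N) :
    LinearMap.ker D = LinearMap.range D := by
  set P : V →ₗ[ZMod 2] V := ∑ i ∈ Finset.range m, N ^ i with hP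
  have hgeom : P * (1 + N) = 1 := by
    have h1 : (1 : V →ₗ[ZMod 2] V) + N = 1 - N := by
      rw [sub_eq_add_neg]
      congr 1
      exact (neg_eq_of_add_eq_zero_right (add_self2 N)).symm
    have h2 := geom_sum_mul N m
    rw [hN, zero_sub] at h2
    have h3 : P * (1 - N) = 1 := by
      have : P * (N - 1) = -1 := h2
      have h4 : P * -(1 - N) = -1 := by rw [neg_sub]; exact this
      rw [mul_neg] at h4
      exact neg_injective h4
    rw [h1, h3]
  have hcomm : Commute D N := hND.symm
  have hPD : P * D = D * P := by
    have : Commute D P := Commute.sum_right _ _ _ (fun i _ => (hcomm.pow_right i))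
    exact this.symm
  apply le_antisymm
  · intro x hx
    have hx0 : D x = 0 := hx
    have h5 := LinearMap.congr_fun hhtp x
    simp only [LinearMap.add_apply, LinearMap.comp_apply, LinearMap.id_apply] at h5
    rw [hx0, map_zero, add_zero] at h5
    have h6 : x = P ((1 + N) x) := by
      have := congrFun (congrArg DFunLike.coe hgeom) x
      simpa using this.symm
    have h7 : ((1 : V →ₗ[ZMod 2] V) + N) x = D (K x) := by
      simpa using h5.symm
    have h8 : x = P (D (K x)) := by rw [← h7]; exact h6
    have h9 : P (D (K x)) = D (P (K x)) := congrFun (congrArg DFunLike.coe hPD) (K x)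
    exact ⟨P (K x), h9.symm.trans h8.symm⟩
  · rintro x ⟨y, rfl⟩
    exact congrFun (congrArg DFunLike.coe hD2) y

lemma finrank_range_eq_finrank_ker [Module.Finite (ZMod 2) V]
    (D E : V →ₗ[ZMod 2] V) (hE : E ∘ₗ E = E) (hDE : E ∘ₗ D + D ∘ₗ E = D)
    (hk : LinearMap.ker D = LinearMap.range D) :
    finrank (ZMod 2) (LinearMap.range E) = finrank (ZMod 2) (LinearMap.ker E) := by
  haveI : Fact (Nat.Prime 2) := ⟨Nat.prime_two⟩
  have hEapp : ∀ x, E (E x) = E x := fun x => congrFun (congrArg DFunLike.coe hE) x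
  have hDEapp : ∀ x, E (D x) = D x + D (E x) := by
    intro x
    have := congrFun (congrArg DFunLike.coe hDE) x
    exact eq_add_of_add_eq2 this
  have hfix : ∀ x, x ∈ LinearMap.range E ↔ E x = x := by
    intro x
    constructor
    · rintro ⟨y, rfl⟩; exact hEapp y
    · intro h; exact ⟨x, h⟩
  have h3 : LinearMap.ker D ⊓ LinearMap.range E = (LinearMap.ker E).map D := by
    apply le_antisymm
    · intro x hx
      rw [Submodule.mem_inf] at hx
      obtain ⟨hx1, hx2⟩ := hx
      rw [hk] at hx1
      obtain ⟨y, rfl⟩ := hx1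
      rw [hfix] at hx2
      refine Submodule.mem_map.mpr ⟨y + E y, ?_, ?_⟩
      · simp only [LinearMap.mem_ker, map_add, hEapp, add_self2]
      · rw [map_add, ← hDEapp, hx2]
    · intro x hx
      obtain ⟨z, hz, rfl⟩ := Submodule.mem_map.mp hx
      rw [Submodule.mem_inf]
      constructor
      · rw [hk]; exact ⟨z, rfl⟩
      · rw [hfix, hDEapp, LinearMap.mem_ker.mp hz, map_zero, add_zero]
  have h4 : LinearMap.ker D ⊓ LinearMap.ker E = (LinearMap.range E).map D := by
    apply le_antisymm
    · intro x hx
      rw [Submodule.mem_inf] at hx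
      obtain ⟨hx1, hx2⟩ := hx
      rw [hk] at hx1
      obtain ⟨y, rfl⟩ := hx1
      have hz : E (D y) = 0 := LinearMap.mem_ker.mp hx2
      have h' : D y = D (E y) := by
        have h0 := hDEapp y
        rw [hz] at h0
        have := eq_add_of_add_eq2 h0.symm
        simpa using this
      exact Submodule.mem_map.mpr ⟨E y, ⟨y, rfl⟩, h'.symm⟩
    · intro x hx
      obtain ⟨z, hz, rfl⟩ := Submodule.mem_map.mp hx
      rw [hfix] at hz
      rw [Submodule.mem_inf]
      constructor
      · rw [hk]; exact ⟨z, rfl⟩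
      · rw [LinearMap.mem_ker, hDEapp, hz, add_self2]
  have hfr : ∀ p : Submodule (ZMod 2) V,
      finrank (ZMod 2) p = finrank (ZMod 2) (p.map D)
        + finrank (ZMod 2) (LinearMap.ker D ⊓ p : Submodule (ZMod 2) V) := by
    intro p
    have h := LinearMap.finrank_range_add_finrank_ker (D.domRestrict p)
    rw [LinearMap.range_domRestrict, LinearMap.ker_domRestrict] at h
    have e2 : Submodule.comap p.subtype (LinearMap.ker D)
        = Submodule.comap p.subtype (LinearMap.ker D ⊓ p) := by
      ext x; simp [x.2]
    rw [e2,
      (Submodule.comapSubtypeEquivOfLe (inf_le_right : LinearMap.ker D ⊓ p ≤ p)).finrank_eq] at h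
    exact h.symm
  have hA := hfr (LinearMap.range E)
  have hB := hfr (LinearMap.ker E)
  rw [h3] at hA
  rw [h4] at hB
  omega

end Key

section Shift
variable {n : ℕ} [NeZero n]

def zdist (j k : ZMod n) : ℕ := (k.val + n - j.val) % n

lemma val_lt' (j : ZMod n) : j.val < n := ZMod.val_lt j

lemma zdist_add (j : ZMod n) (m : ℕ) (hm1 : 1 ≤ m) (hmn : m < n) :
    zdist j (j + (m : ZMod n)) = m := by
  have hj := val_lt' j
  have hv : ((m : ZMod n)).val = m := ZMod.val_cast_of_lt hmn
  have hadd : (j + (m : ZMod n)).val = (j.val + m) % n := by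
    rw [ZMod.val_add, hv]
  rw [zdist, hadd]
  rcases Nat.lt_or_ge (j.val + m) n with h | h
  · rw [Nat.mod_eq_of_lt h]
    have : j.val + m + n - j.val = m + n := by omega
    rw [this, Nat.add_mod_right, Nat.mod_eq_of_lt hmn]
  · have h2 : (j.val + m) % n = j.val + m - n := by
      rw [Nat.mod_eq_sub_mod h, Nat.mod_eq_of_lt (by omega)]
    rw [h2]
    have : j.val + m - n + n - j.val = m := by omega
    rw [this, Nat.mod_eq_of_lt hmn]

lemma zdist_pos {j k : ZMod n} (h : k ≠ j) : 1 ≤ zdist j k ∧ zdist j k < n := by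
  have hj := val_lt' j
  have hk := val_lt' k
  have hne : k.val ≠ j.val := fun hh => h (ZMod.val_injective n hh)
  constructor
  · rcases Nat.lt_or_ge (k.val + n - j.val) n with h1 | h1
    · rw [zdist, Nat.mod_eq_of_lt h1]; omega
    · have h2 : k.val + n - j.val < 2 * n := by omega
      rw [zdist, Nat.mod_eq_sub_mod h1, Nat.mod_eq_of_lt (by omega)]
      omega
  · exact Nat.mod_lt _ (Nat.pos_of_ne_zero (NeZero.ne n))

lemma zdist_of_le {j k : ZMod n} (h : j.val ≤ k.val) : zdist j k = k.val - j.val := by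
  have hk := val_lt' k
  have h1 : k.val + n - j.val = (k.val - j.val) + n := by omega
  rw [zdist, h1, Nat.add_mod_right, Nat.mod_eq_of_lt (by omega)]

lemma zdist_of_gt {j k : ZMod n} (h : k.val < j.val) : zdist j k = k.val + n - j.val := by
  have hj := val_lt' j
  rw [zdist, Nat.mod_eq_of_lt (by omega)]

lemma add_zdist (j k : ZMod n) : j + ((zdist j k : ℕ) : ZMod n) = k := by
  rw [zdist, ZMod.natCast_mod]
  have h1 : j.val ≤ k.val + n := by have := val_lt' j; omega
  push_cast [Nat.cast_sub h1]
  rw [ZMod.natCast_val, ZMod.natCast_val, ZMod.cast_id, ZMod.cast_id]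
  rw [ZMod.natCast_self]
  ring

lemma sum_Ico_shift {A : Type*} [AddCommMonoid A] (j : ZMod n) (r : ℕ) (hr : r ≤ n)
    (g : ZMod n → A) :
    ∑ m ∈ Finset.Ico 1 r, g (j + (m : ZMod n)) =
    ∑ k ∈ Finset.univ.filter (fun k => k ≠ j ∧ zdist j k < r), g k := by
  refine Finset.sum_nbij' (fun m => j + (m : ZMod n)) (fun k => zdist j k) ?_ ?_ ?_ ?_ ?_
  · intro m hm
    rw [Finset.mem_Ico] at hm
    obtain ⟨hm1, hm2⟩ := hm
    have hmn : m < n := lt_of_lt_of_le hm2 hr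
    rw [Finset.mem_filter]
    refine ⟨Finset.mem_univ _, ?_, ?_⟩
    · intro hh
      have := zdist_add j m hm1 hmn
      rw [hh] at this
      have h0 : zdist j j = 0 := by
        rw [zdist]
        have : j.val + n - j.val = n := by have := val_lt' j; omega
        rw [this, Nat.mod_self]
      omega
    · rw [zdist_add j m hm1 hmn]; omega
  · intro k hk
    rw [Finset.mem_filter] at hk
    obtain ⟨-, hk1, hk2⟩ := hk
    rw [Finset.mem_Ico]
    exact ⟨(zdist_pos hk1).1, hk2⟩
  · intro m hm
    rw [Finset.mem_Ico] at hm
    exact zdist_add j m hm.1 (lt_of_lt_of_le hm.2 hr)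
  · intro k hk
    exact add_zdist j k
  · intro m hm
    rfl

end Shift

section Mat
variable {n : ℕ} [NeZero n] {M : ZMod n → Type}
  [∀ j, AddCommGroup (M j)] [∀ j, Module (ZMod 2) (M j)]

def mat (T : ∀ j l : ZMod n, M j →ₗ[ZMod 2] M l) : (∀ j, M j) →ₗ[ZMod 2] (∀ j, M j) :=
  LinearMap.pi fun l => ∑ j, (T j l) ∘ₗ LinearMap.proj j

lemma mat_apply (T : ∀ j l : ZMod n, M j →ₗ[ZMod 2] M l) (x : ∀ j, M j) (l : ZMod n) :
    mat T x l = ∑ j, T j l (x j) := by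
  simp [mat, LinearMap.pi_apply, LinearMap.sum_apply]

lemma mat_comp (S T : ∀ j l : ZMod n, M j →ₗ[ZMod 2] M l) :
    mat S ∘ₗ mat T = mat (fun j l => ∑ k, S k l ∘ₗ T j k) := by
  refine LinearMap.ext fun x => funext fun l => ?_
  simp only [LinearMap.comp_apply, mat_apply, LinearMap.sum_apply]
  rw [Finset.sum_comm]
  congr 1; ext k
  rw [map_sum]

def idm : ∀ j l : ZMod n, M j →ₗ[ZMod 2] M l := fun j l =>
  if h : j = l then h ▸ LinearMap.id else 0

@[simp] lemma idm_same (j : ZMod n) : idm (M := M) j j = LinearMap.id := by simp [idm]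

lemma idm_ne {j l : ZMod n} (h : j ≠ l) : idm (M := M) j l = 0 := by simp [idm, h]

lemma mat_idm : mat (idm (M := M)) = LinearMap.id := by
  refine LinearMap.ext fun x => funext fun l => ?_
  rw [mat_apply, Finset.sum_eq_single l]
  · simp [idm]
  · intro j _ hj; simp [idm, hj]
  · simp

lemma mat_add (S T : ∀ j l : ZMod n, M j →ₗ[ZMod 2] M l) :
    mat (fun j l => S j l + T j l) = mat S + mat T := by
  refine LinearMap.ext fun x => funext fun l => ?_; simp [mat_apply, Finset.sum_add_distrib]

lemma mat_zero : mat (fun j l => (0 : M j →ₗ[ZMod 2] M l)) = 0 := by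
  refine LinearMap.ext fun x => funext fun l => ?_; simp [mat_apply]

lemma mat_congr {S T : ∀ j l : ZMod n, M j →ₗ[ZMod 2] M l} (h : ∀ j l, S j l = T j l) :
    mat S = mat T := by
  have : S = T := funext fun j => funext fun l => h j l
  rw [this]

lemma mat_pow_triangular (T : ∀ j l : ZMod n, M j →ₗ[ZMod 2] M l)
    (hT : ∀ j l, ¬ j.val < l.val → T j l = 0) : (mat T) ^ n = 0 := by
  have main : ∀ p : ℕ, ∃ S, (mat T) ^ p = mat S ∧
      ∀ j l : ZMod n, l.val < j.val + p → S j l = 0 := by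
    intro p
    induction p with
    | zero =>
      refine ⟨idm, by rw [pow_zero]; exact mat_idm.symm, fun j l h => ?_⟩
      have : j ≠ l := fun hh => by subst hh; omega
      simp [idm, this]
    | succ p ih =>
      obtain ⟨S, hS, hS0⟩ := ih
      refine ⟨fun j l => ∑ k, S k l ∘ₗ T j k, ?_, ?_⟩
      · rw [pow_succ, Module.End.mul_eq_comp, hS, mat_comp]
      · intro j l h
        apply Finset.sum_eq_zero
        intro k _
        by_cases hk : j.val < k.val
        · have : S k l = 0 := hS0 k l (by omega)
          rw [this, LinearMap.zero_comp]
        · rw [hT j k hk, LinearMap.comp_zero]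
  obtain ⟨S, hS, hS0⟩ := main n
  rw [hS]
  have : ∀ j l : ZMod n, S j l = 0 := fun j l => hS0 j l (by
    have := ZMod.val_lt l
    omega)
  rw [mat_congr (T := fun j l => 0) this, mat_zero]

def diagm (g : ∀ j, M j →ₗ[ZMod 2] M j) : ∀ j l : ZMod n, M j →ₗ[ZMod 2] M l := fun j l =>
  if h : j = l then h ▸ g j else 0

@[simp] lemma diagm_same (g : ∀ j, M j →ₗ[ZMod 2] M j) (j : ZMod n) : diagm g j j = g j := by
  simp [diagm]

lemma diagm_ne (g : ∀ j, M j →ₗ[ZMod 2] M j) {j l : ZMod n} (h : j ≠ l) : diagm g j l = 0 := by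
  simp [diagm, h]

lemma sum_diag_comp (g : ∀ j, M j →ₗ[ZMod 2] M j) (X : ∀ j l : ZMod n, M j →ₗ[ZMod 2] M l)
    (j l : ZMod n) : ∑ k, diagm g k l ∘ₗ X j k = g l ∘ₗ X j l := by
  rw [Finset.sum_eq_single l]
  · rw [diagm_same]
  · intro k _ hk
    rw [diagm_ne g hk, LinearMap.zero_comp]
  · simp

lemma sum_comp_diag (g : ∀ j, M j →ₗ[ZMod 2] M j) (X : ∀ j l : ZMod n, M j →ₗ[ZMod 2] M l)
    (j l : ZMod n) : ∑ k, X k l ∘ₗ diagm g j k = X j l ∘ₗ g j := by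
  rw [Finset.sum_eq_single j]
  · rw [diagm_same]
  · intro k _ hk
    rw [diagm_ne g (Ne.symm hk), LinearMap.comp_zero]
  · simp

lemma mat_diagm_apply (g : ∀ j, M j →ₗ[ZMod 2] M j) (x : ∀ j, M j) (l : ZMod n) :
    mat (diagm g) x l = g l (x l) := by
  rw [mat_apply, Finset.sum_eq_single l]
  · simp
  · intro j _ hj; rw [diagm_ne g hj, LinearMap.zero_apply]
  · simp

def subPiEquiv (p : ∀ j, Submodule (ZMod 2) (M j)) :
    (Submodule.pi Set.univ p) ≃ₗ[ZMod 2] ∀ j, p j where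
  toFun x j := ⟨x.1 j, x.2 j (Set.mem_univ j)⟩
  map_add' x y := rfl
  map_smul' c x := rfl
  invFun y := ⟨fun j => y j, fun j _ => (y j).2⟩
  left_inv x := rfl
  right_inv y := rfl

lemma finrank_subPi [∀ j, Module.Finite (ZMod 2) (M j)] (p : ∀ j, Submodule (ZMod 2) (M j)) :
    finrank (ZMod 2) (Submodule.pi Set.univ p) = ∑ j, finrank (ZMod 2) (p j) := by
  haveI : Fact (Nat.Prime 2) := ⟨Nat.prime_two⟩
  rw [(subPiEquiv p).finrank_eq, Module.finrank_pi_fintype]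

lemma range_mat_diagm (g : ∀ j, M j →ₗ[ZMod 2] M j) :
    LinearMap.range (mat (diagm g)) = Submodule.pi Set.univ (fun j => LinearMap.range (g j)) := by
  apply le_antisymm
  · rintro x ⟨y, rfl⟩
    intro j _
    rw [mat_diagm_apply]
    exact ⟨y j, rfl⟩
  · intro x hx
    choose y hy using fun j => hx j (Set.mem_univ j)
    exact ⟨y, funext fun l => by rw [mat_diagm_apply, hy]⟩

lemma ker_mat_diagm (g : ∀ j, M j →ₗ[ZMod 2] M j) :
    LinearMap.ker (mat (diagm g)) = Submodule.pi Set.univ (fun j => LinearMap.ker (g j)) := by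
  ext x
  simp only [LinearMap.mem_ker, Submodule.mem_pi, Set.mem_univ, forall_true_left]
  constructor
  · intro h j
    have := congrFun h j
    rwa [mat_diagm_apply] at this
  · intro h
    funext l
    rw [mat_diagm_apply]
    exact h l

end Mat

theorem stmt4 (n : ℕ) [NeZero n] (M : ZMod n → Type)
    [∀ j, AddCommGroup (M j)] [∀ j, Module (ZMod 2) (M j)]
    [∀ j, Module.Finite (ZMod 2) (M j)]
    (d : ∀ j, M j →ₗ[ZMod 2] M j)
    (f : ∀ j k : ZMod n, M j →ₗ[ZMod 2] M k)
    (hd : ∀ j, d j ∘ₗ d j = 0)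
    (hrel : ∀ (j : ZMod n) (r : ℕ), 1 ≤ r → r < n →
      (∑ m ∈ Finset.Ico 1 r,
          f (j + (m : ZMod n)) (j + (r : ZMod n)) ∘ₗ f j (j + (m : ZMod n))) =
        d (j + (r : ZMod n)) ∘ₗ f j (j + (r : ZMod n)) +
          f j (j + (r : ZMod n)) ∘ₗ d j)
    (hdiag : ∀ j : ZMod n,
      (∑ m ∈ Finset.Ico 1 n, f (j + (m : ZMod n)) j ∘ₗ f j (j + (m : ZMod n))) =
        d j ∘ₗ f j j + f j j ∘ₗ d j + LinearMap.id)
    (e : ∀ j, M j →ₗ[ZMod 2] M j)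
    (he : ∀ j, e j ∘ₗ e j = e j)
    (hdodd : ∀ j, d j ∘ₗ e j + e j ∘ₗ d j = d j)
    (hfdeg : ∀ j k : ZMod n, j.val < k.val →
      f j k ∘ₗ e j + e k ∘ₗ f j k = ((k.val - j.val - 1 : ℕ) : ZMod 2) • f j k) :
    ∑ j : ZMod n, (-1 : ℤ) ^ j.val *
      ((Module.finrank (ZMod 2) (LinearMap.range (e j)) : ℤ) -
        (Module.finrank (ZMod 2) (LinearMap.ker (e j)) : ℤ)) = 0 := by
  classical
  haveI : Fact (Nat.Prime 2) := ⟨Nat.prime_two⟩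
  -- the matrices
  set Fm : ∀ j l : ZMod n, M j →ₗ[ZMod 2] M l :=
    fun j l => if j.val < l.val then f j l else 0 with hFm
  set Km : ∀ j l : ZMod n, M j →ₗ[ZMod 2] M l :=
    fun j l => if l.val ≤ j.val then f j l else 0 with hKm
  set E' : ∀ j, M j →ₗ[ZMod 2] M j :=
    fun j => if Even j.val then e j else LinearMap.id + e j with hE'
  set Dm : ∀ j l : ZMod n, M j →ₗ[ZMod 2] M l :=
    fun j l => diagm d j l + Fm j l with hDm
  set D : (∀ j, M j) →ₗ[ZMod 2] (∀ j, M j) := mat Dm with hD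
  set Kt : (∀ j, M j) →ₗ[ZMod 2] (∀ j, M j) := mat Km with hKt
  set Et : (∀ j, M j) →ₗ[ZMod 2] (∀ j, M j) := mat (diagm E') with hEt
  -- D squared is zero
  have hvalne : ∀ {a b : ZMod n}, a.val ≠ b.val → a ≠ b :=
    fun h hh => h (by rw [hh])
  have hD2 : D ∘ₗ D = 0 := by
    rw [hD, mat_comp]
    refine Eq.trans (mat_congr ?_) mat_zero
    intro j l
    have hexp : ∀ k : ZMod n, Dm k l ∘ₗ Dm j k
        = (diagm d k l ∘ₗ diagm d j k + diagm d k l ∘ₗ Fm j k)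
          + (Fm k l ∘ₗ diagm d j k + Fm k l ∘ₗ Fm j k) := by
      intro k
      simp only [hDm, LinearMap.add_comp, LinearMap.comp_add]
      abel
    rw [Finset.sum_congr rfl fun k _ => hexp k, Finset.sum_add_distrib, Finset.sum_add_distrib,
      Finset.sum_add_distrib, sum_diag_comp d (diagm d) j l, sum_diag_comp d Fm j l,
      sum_comp_diag d Fm j l]
    by_cases hjl : j.val < l.val
    · have hjne : j ≠ l := hvalne (by omega)
      have hr1 : 1 ≤ zdist j l := by
        rw [zdist_of_le (le_of_lt hjl)]; omega
      have hrn : zdist j l < n := by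
        rw [zdist_of_le (le_of_lt hjl)]; have := val_lt' l; omega
      have hl : j + ((zdist j l : ℕ) : ZMod n) = l := add_zdist j l
      have hrel' := hrel j (zdist j l) hr1 hrn
      rw [hl] at hrel'
      have hsum : (∑ m ∈ Finset.Ico 1 (zdist j l),
            f (j + (m : ZMod n)) l ∘ₗ f j (j + (m : ZMod n)))
          = ∑ k ∈ Finset.univ.filter (fun k => k ≠ j ∧ zdist j k < zdist j l),
              f k l ∘ₗ f j k :=
        sum_Ico_shift j (zdist j l) (le_of_lt hrn) (fun k => f k l ∘ₗ f j k)
      have hcond : ∀ k : ZMod n,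
          (k ≠ j ∧ zdist j k < zdist j l) ↔ (j.val < k.val ∧ k.val < l.val) := by
        intro k
        have h1 := val_lt' l
        have h2 := val_lt' k
        have h3 := val_lt' j
        constructor
        · rintro ⟨hk1, hk2⟩
          have hk1' : k.val ≠ j.val := fun hh => hk1 (ZMod.val_injective n hh)
          rcases Nat.lt_or_ge k.val j.val with h | h
          · rw [zdist_of_gt h, zdist_of_le (le_of_lt hjl)] at hk2
            omega
          · rw [zdist_of_le h, zdist_of_le (le_of_lt hjl)] at hk2
            omega
        · rintro ⟨hk1, hk2⟩
          refine ⟨hvalne (by omega), ?_⟩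
          rw [zdist_of_le (by omega), zdist_of_le (le_of_lt hjl)]
          omega
      have hFF : (∑ k, Fm k l ∘ₗ Fm j k)
          = ∑ k ∈ Finset.univ.filter (fun k => k ≠ j ∧ zdist j k < zdist j l),
              f k l ∘ₗ f j k := by
        rw [Finset.sum_filter]
        apply Finset.sum_congr rfl
        intro k _
        by_cases hc : j.val < k.val ∧ k.val < l.val
        · rw [if_pos ((hcond k).mpr hc)]
          simp only [hFm]
          rw [if_pos hc.1, if_pos hc.2]
        · rw [if_neg (fun hh => hc ((hcond k).mp hh))]
          rcases not_and_or.mp hc with h | h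
          · simp only [hFm]
            rw [if_neg h, LinearMap.comp_zero]
          · simp only [hFm]
            rw [if_neg h, LinearMap.zero_comp]
      rw [hFF, ← hsum, hrel', diagm_ne d hjne]
      simp only [hFm]
      rw [if_pos hjl, LinearMap.comp_zero]
      rw [show (0 : M j →ₗ[ZMod 2] M l) + d l ∘ₗ f j l + (f j l ∘ₗ d j + (d l ∘ₗ f j l + f j l ∘ₗ d j))
        = (d l ∘ₗ f j l + d l ∘ₗ f j l) + (f j l ∘ₗ d j + f j l ∘ₗ d j) from by abel,
        add_self2, add_self2, add_zero]
    · have hFF : (∑ k, Fm k l ∘ₗ Fm j k) = 0 := by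
        apply Finset.sum_eq_zero
        intro k _
        by_cases h1 : j.val < k.val
        · simp only [hFm]
          rw [if_neg (show ¬ k.val < l.val by omega), LinearMap.zero_comp]
        · simp only [hFm]
          rw [if_neg h1, LinearMap.comp_zero]
      rw [hFF]
      simp only [hFm]
      rw [if_neg hjl, LinearMap.comp_zero]
      by_cases hje : j = l
      · subst hje
        rw [diagm_same, hd j]
        simp
      · rw [diagm_ne d hje]
        simp
  -- homotopy matrix
  set Xm : ∀ j l : ZMod n, M j →ₗ[ZMod 2] M l :=
    fun j l => (∑ k, Dm k l ∘ₗ Km j k) + (∑ k, Km k l ∘ₗ Dm j k) with hXm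
  set Nm : ∀ j l : ZMod n, M j →ₗ[ZMod 2] M l := fun j l => Xm j l + idm j l with hNm
  have hNtri : ∀ j l : ZMod n, ¬ j.val < l.val → Nm j l = 0 := by
    intro j l hjl
    have hN0 : Nm j l = Xm j l + idm j l := rfl
    have hX0 : Xm j l = (∑ k, Dm k l ∘ₗ Km j k) + (∑ k, Km k l ∘ₗ Dm j k) := rfl
    have h1 : (∑ k, Dm k l ∘ₗ Km j k) = d l ∘ₗ Km j l + ∑ k, Fm k l ∘ₗ Km j k := by
      rw [← sum_diag_comp d Km j l, ← Finset.sum_add_distrib]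
      apply Finset.sum_congr rfl
      intro k _
      simp only [hDm, LinearMap.add_comp]
    have h2 : (∑ k, Km k l ∘ₗ Dm j k) = Km j l ∘ₗ d j + ∑ k, Km k l ∘ₗ Fm j k := by
      rw [← sum_comp_diag d Km j l, ← Finset.sum_add_distrib]
      apply Finset.sum_congr rfl
      intro k _
      simp only [hDm, LinearMap.comp_add]
    have hKjl : Km j l = f j l := by
      simp only [hKm]
      rw [if_pos (le_of_not_gt hjl)]
    by_cases hje : j = l
    · subst hje
      have hsum : (∑ m ∈ Finset.Ico 1 n,
            f (j + (m : ZMod n)) j ∘ₗ f j (j + (m : ZMod n)))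
          = ∑ k ∈ Finset.univ.filter (fun k => k ≠ j ∧ zdist j k < n),
              f k j ∘ₗ f j k :=
        sum_Ico_shift j n (le_refl n) (fun k => f k j ∘ₗ f j k)
      have hS : (∑ k, Fm k j ∘ₗ Km j k) + (∑ k, Km k j ∘ₗ Fm j k)
          = d j ∘ₗ f j j + f j j ∘ₗ d j + LinearMap.id := by
        rw [← Finset.sum_add_distrib]
        have hS1 : (∑ k, (Fm k j ∘ₗ Km j k + Km k j ∘ₗ Fm j k))
            = ∑ k ∈ Finset.univ.filter (fun k => k ≠ j ∧ zdist j k < n),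
                f k j ∘ₗ f j k := by
          rw [Finset.sum_filter]
          apply Finset.sum_congr rfl
          intro k _
          by_cases hkj : k = j
          · subst hkj
            rw [if_neg (by simp)]
            simp only [hFm, hKm]
            rw [if_neg (lt_irrefl _), LinearMap.zero_comp, LinearMap.comp_zero, add_zero]
          · have hcond : k ≠ j ∧ zdist j k < n := ⟨hkj, (zdist_pos hkj).2⟩
            rw [if_pos hcond]
            have hkv : k.val ≠ j.val := fun hh => hkj (ZMod.val_injective n hh)
            rcases Nat.lt_or_ge k.val j.val with h | h
            · simp only [hFm, hKm]
              rw [if_pos h, if_pos (le_of_lt h), if_neg (show ¬ j.val ≤ k.val by omega),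
                if_neg (show ¬ j.val < k.val by omega), LinearMap.zero_comp, add_zero]
            · have h' : j.val < k.val := by omega
              simp only [hFm, hKm]
              rw [if_neg (show ¬ k.val < j.val by omega),
                if_neg (show ¬ k.val ≤ j.val by omega), if_pos (show j.val ≤ k.val by omega),
                if_pos h', LinearMap.zero_comp, zero_add]
        rw [hS1, ← hsum]
        exact hdiag j
      rw [hN0, hX0, h1, h2, hKjl, idm_same]
      rw [show d j ∘ₗ f j j + (∑ k, Fm k j ∘ₗ Km j k)
            + (f j j ∘ₗ d j + ∑ k, Km k j ∘ₗ Fm j k) + LinearMap.id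
          = ((∑ k, Fm k j ∘ₗ Km j k) + (∑ k, Km k j ∘ₗ Fm j k))
            + (d j ∘ₗ f j j + f j j ∘ₗ d j + LinearMap.id) from by abel, hS, add_self2]
    · have hlv : l.val < j.val := by
        have hkv : l.val ≠ j.val := fun hh => hje (ZMod.val_injective n hh).symm
        omega
      have hlj : l ≠ j := fun hh => hje hh.symm
      have hr1 : 1 ≤ zdist j l := (zdist_pos hlj).1
      have hrn : zdist j l < n := (zdist_pos hlj).2
      have hl : j + ((zdist j l : ℕ) : ZMod n) = l := add_zdist j l
      have hrel' := hrel j (zdist j l) hr1 hrn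
      rw [hl] at hrel'
      have hsum : (∑ m ∈ Finset.Ico 1 (zdist j l),
            f (j + (m : ZMod n)) l ∘ₗ f j (j + (m : ZMod n)))
          = ∑ k ∈ Finset.univ.filter (fun k => k ≠ j ∧ zdist j k < zdist j l),
              f k l ∘ₗ f j k :=
        sum_Ico_shift j (zdist j l) (le_of_lt hrn) (fun k => f k l ∘ₗ f j k)
      have hzjl : zdist j l = l.val + n - j.val := zdist_of_gt hlv
      have hcond : ∀ k : ZMod n,
          (k ≠ j ∧ zdist j k < zdist j l) ↔ (k.val < l.val ∨ j.val < k.val) := by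
        intro k
        have hn1 := val_lt' j
        have hn2 := val_lt' k
        have hn3 := val_lt' l
        constructor
        · rintro ⟨hk1, hk2⟩
          have hk1' : k.val ≠ j.val := fun hh => hk1 (ZMod.val_injective n hh)
          rcases Nat.lt_or_ge k.val j.val with h | h
          · rw [zdist_of_gt h, hzjl] at hk2
            left; omega
          · right; omega
        · rintro (h | h)
          · refine ⟨hvalne (by omega), ?_⟩
            rw [zdist_of_gt (by omega), hzjl]
            omega
          · refine ⟨hvalne (by omega), ?_⟩
            rw [zdist_of_le (le_of_lt h), hzjl]
            omega
      have hS : (∑ k, Fm k l ∘ₗ Km j k) + (∑ k, Km k l ∘ₗ Fm j k)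
          = d l ∘ₗ f j l + f j l ∘ₗ d j := by
        rw [← Finset.sum_add_distrib]
        have hS1 : (∑ k, (Fm k l ∘ₗ Km j k + Km k l ∘ₗ Fm j k))
            = ∑ k ∈ Finset.univ.filter (fun k => k ≠ j ∧ zdist j k < zdist j l),
                f k l ∘ₗ f j k := by
          rw [Finset.sum_filter]
          apply Finset.sum_congr rfl
          intro k _
          by_cases hc1 : k.val < l.val
          · have hkj' : k.val ≤ j.val := by omega
            rw [if_pos ((hcond k).mpr (Or.inl hc1))]
            simp only [hFm, hKm]
            rw [if_pos hc1, if_pos hkj', if_neg (show ¬ l.val ≤ k.val by omega),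
              if_neg (show ¬ j.val < k.val by omega), LinearMap.zero_comp, add_zero]
          · by_cases hc2 : j.val < k.val
            · rw [if_pos ((hcond k).mpr (Or.inr hc2))]
              simp only [hFm, hKm]
              rw [if_neg hc1, if_neg (show ¬ k.val ≤ j.val by omega),
                if_pos (show l.val ≤ k.val by omega), if_pos hc2,
                LinearMap.zero_comp, zero_add]
            · rw [if_neg (fun hh => by rcases (hcond k).mp hh with h | h <;> omega)]
              simp only [hFm, hKm]
              rw [if_neg hc1, if_neg hc2, LinearMap.zero_comp, LinearMap.comp_zero, add_zero]
        rw [hS1, ← hsum]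
        exact hrel'
      rw [hN0, hX0, h1, h2, hKjl, idm_ne hje, add_zero]
      rw [show d l ∘ₗ f j l + (∑ k, Fm k l ∘ₗ Km j k)
            + (f j l ∘ₗ d j + ∑ k, Km k l ∘ₗ Fm j k)
          = ((∑ k, Fm k l ∘ₗ Km j k) + (∑ k, Km k l ∘ₗ Fm j k))
            + (d l ∘ₗ f j l + f j l ∘ₗ d j) from by abel, hS, add_self2]
  have hhtp : D ∘ₗ Kt + Kt ∘ₗ D = LinearMap.id + mat Nm := by
    rw [hD, hKt, mat_comp, mat_comp, ← mat_add]
    have h1 : mat Nm = mat Xm + LinearMap.id := by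
      rw [hNm, mat_add, mat_idm]
    rw [h1]
    have h2 : LinearMap.id + (mat Xm + LinearMap.id)
        = mat Xm + (LinearMap.id + LinearMap.id) := by abel
    rw [h2, add_self2, add_zero]
    try exact mat_congr fun j l => rfl
  have hNpow : (mat Nm) ^ n = 0 := mat_pow_triangular Nm hNtri
  have hNeq : mat Nm = D ∘ₗ Kt + Kt ∘ₗ D + LinearMap.id := by
    rw [hhtp]
    rw [show LinearMap.id + mat Nm + LinearMap.id
      = mat Nm + (LinearMap.id + LinearMap.id) from by abel, add_self2, add_zero]
  have hND : mat Nm * D = D * mat Nm := by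
    simp only [Module.End.mul_eq_comp, hNeq]
    simp only [LinearMap.add_comp, LinearMap.comp_add, LinearMap.id_comp, LinearMap.comp_id,
      LinearMap.comp_assoc, hD2, LinearMap.comp_zero, LinearMap.zero_comp]
    rw [show D ∘ₗ D ∘ₗ Kt = (D ∘ₗ D) ∘ₗ Kt from (LinearMap.comp_assoc _ _ _).symm, hD2,
      LinearMap.zero_comp]
    abel
  have hker : LinearMap.ker D = LinearMap.range D :=
    ker_eq_range_of_homotopy D Kt (mat Nm) n hD2 hNpow hND hhtp
  -- grading
  have hE'even : ∀ j : ZMod n, Even j.val → E' j = e j := fun j hj => by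
    rw [hE']; exact if_pos hj
  have hE'odd : ∀ j : ZMod n, ¬ Even j.val → E' j = LinearMap.id + e j := fun j hj => by
    rw [hE']; exact if_neg hj
  have hEE : Et ∘ₗ Et = Et := by
    rw [hEt, mat_comp]
    apply mat_congr
    intro j l
    rw [sum_diag_comp]
    by_cases hjl : j = l
    · subst hjl
      rw [diagm_same, hE']
      by_cases hj : Even j.val
      · simp only [if_pos hj]; exact he j
      · simp only [if_neg hj]
        simp only [LinearMap.add_comp, LinearMap.comp_add, LinearMap.id_comp, LinearMap.comp_id,
          he j]
        rw [show LinearMap.id + e j + (e j + e j) = LinearMap.id + e j + (e j + e j) from rfl,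
          add_self2, add_zero]
    · rw [diagm_ne E' hjl]; simp
  have hED : Et ∘ₗ D + D ∘ₗ Et = D := by
    rw [hEt, hD, mat_comp, mat_comp, ← mat_add]
    apply mat_congr
    intro j l
    rw [sum_diag_comp E' Dm j l, sum_comp_diag E' Dm j l]
    by_cases hje : j = l
    · subst hje
      have hDjj : Dm j j = d j := by
        simp only [hDm, hFm]
        rw [diagm_same, if_neg (lt_irrefl _), add_zero]
      rw [hDjj]
      by_cases hj : Even j.val
      · rw [hE'even j hj, add_comm]
        exact hdodd j
      · rw [hE'odd j hj]
        simp only [LinearMap.add_comp, LinearMap.comp_add, LinearMap.id_comp, LinearMap.comp_id]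
        rw [show d j + e j ∘ₗ d j + (d j + d j ∘ₗ e j)
          = (d j ∘ₗ e j + e j ∘ₗ d j) + (d j + d j) from by abel, add_self2, add_zero, hdodd j]
    · by_cases hlt : j.val < l.val
      · have hDjl : Dm j l = f j l := by
          simp only [hDm, hFm]
          rw [diagm_ne d hje, if_pos hlt, zero_add]
        rw [hDjl]
        have hf := hfdeg j l hlt
        have hcast : ∀ m : ℕ, ((m : ZMod 2)) = ((m % 2 : ℕ) : ZMod 2) :=
          fun m => (ZMod.natCast_mod m 2).symm
        by_cases hj : Even j.val <;> by_cases hl : Even l.val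
        · have hsc : ((l.val - j.val - 1 : ℕ) : ZMod 2) = 1 := by
            rw [hcast]
            have hj2 := Nat.even_iff.mp hj
            have hl2 := Nat.even_iff.mp hl
            have hm : (l.val - j.val - 1) % 2 = 1 := by omega
            rw [hm, Nat.cast_one]
          rw [hsc, one_smul] at hf
          rw [hE'even j hj, hE'even l hl, add_comm]
          exact hf
        · have hsc : ((l.val - j.val - 1 : ℕ) : ZMod 2) = 0 := by
            rw [hcast]
            have hj2 := Nat.even_iff.mp hj
            have hl2 := Nat.not_even_iff.mp hl
            have hm : (l.val - j.val - 1) % 2 = 0 := by omega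
            rw [hm, Nat.cast_zero]
          rw [hsc, zero_smul] at hf
          rw [hE'even j hj, hE'odd l hl]
          simp only [LinearMap.add_comp, LinearMap.id_comp]
          rw [show f j l + e l ∘ₗ f j l + f j l ∘ₗ e j
            = f j l + (f j l ∘ₗ e j + e l ∘ₗ f j l) from by abel, hf, add_zero]
        · have hsc : ((l.val - j.val - 1 : ℕ) : ZMod 2) = 0 := by
            rw [hcast]
            have hj2 := Nat.not_even_iff.mp hj
            have hl2 := Nat.even_iff.mp hl
            have hm : (l.val - j.val - 1) % 2 = 0 := by omega
            rw [hm, Nat.cast_zero]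
          rw [hsc, zero_smul] at hf
          rw [hE'odd j hj, hE'even l hl]
          simp only [LinearMap.comp_add, LinearMap.comp_id]
          rw [show e l ∘ₗ f j l + (f j l + f j l ∘ₗ e j)
            = f j l + (f j l ∘ₗ e j + e l ∘ₗ f j l) from by abel, hf, add_zero]
        · have hsc : ((l.val - j.val - 1 : ℕ) : ZMod 2) = 1 := by
            rw [hcast]
            have hj2 := Nat.not_even_iff.mp hj
            have hl2 := Nat.not_even_iff.mp hl
            have hm : (l.val - j.val - 1) % 2 = 1 := by omega
            rw [hm, Nat.cast_one]
          rw [hsc, one_smul] at hf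
          rw [hE'odd j hj, hE'odd l hl]
          simp only [LinearMap.add_comp, LinearMap.comp_add, LinearMap.id_comp,
            LinearMap.comp_id]
          rw [show f j l + e l ∘ₗ f j l + (f j l + f j l ∘ₗ e j)
            = (f j l ∘ₗ e j + e l ∘ₗ f j l) + (f j l + f j l) from by abel, hf, add_self2,
            add_zero]
      · have hDjl : Dm j l = 0 := by
          simp only [hDm, hFm]
          rw [diagm_ne d hje, if_neg hlt, add_zero]
        rw [hDjl]
        simp
  have hEq := finrank_range_eq_finrank_ker D Et hEE hED hker
  rw [hEt, range_mat_diagm, ker_mat_diagm, finrank_subPi, finrank_subPi] at hEq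
  -- translate componentwise
  have hre : ∀ j, finrank (ZMod 2) (LinearMap.range (E' j))
      = if Even j.val then finrank (ZMod 2) (LinearMap.range (e j))
        else finrank (ZMod 2) (LinearMap.ker (e j)) := by
    intro j
    by_cases hj : Even j.val
    · rw [hE'even j hj, if_pos hj]
    · rw [hE'odd j hj, if_neg hj, range_id_add (e j) (he j)]
  have hke : ∀ j, finrank (ZMod 2) (LinearMap.ker (E' j))
      = if Even j.val then finrank (ZMod 2) (LinearMap.ker (e j))
        else finrank (ZMod 2) (LinearMap.range (e j)) := by
    intro j
    by_cases hj : Even j.val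
    · rw [hE'even j hj, if_pos hj]
    · rw [hE'odd j hj, if_neg hj, ker_id_add (e j) (he j)]
  rw [Finset.sum_congr rfl (fun j _ => hre j), Finset.sum_congr rfl (fun j _ => hke j)] at hEq
  -- final arithmetic
  have hEqZ : (∑ j : ZMod n, (if Even (ZMod.val j) then (finrank (ZMod 2) (LinearMap.range (e j)) : ℤ)
        else (finrank (ZMod 2) (LinearMap.ker (e j)) : ℤ)))
      = ∑ j : ZMod n, (if Even (ZMod.val j) then (finrank (ZMod 2) (LinearMap.ker (e j)) : ℤ)
        else (finrank (ZMod 2) (LinearMap.range (e j)) : ℤ)) := by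
    have := congrArg (Nat.cast : ℕ → ℤ) hEq
    push_cast at this
    convert this using 2 <;> rename_i j <;> split <;> simp
  have hterm : ∀ j : ZMod n, (-1 : ℤ) ^ j.val *
      ((finrank (ZMod 2) (LinearMap.range (e j)) : ℤ) - (finrank (ZMod 2) (LinearMap.ker (e j)) : ℤ))
      = (if Even (ZMod.val j) then (finrank (ZMod 2) (LinearMap.range (e j)) : ℤ)
          else (finrank (ZMod 2) (LinearMap.ker (e j)) : ℤ))
        - (if Even (ZMod.val j) then (finrank (ZMod 2) (LinearMap.ker (e j)) : ℤ)
          else (finrank (ZMod 2) (LinearMap.range (e j)) : ℤ)) := by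
    intro j
    by_cases hj : Even (ZMod.val j)
    · rw [if_pos hj, if_pos hj, hj.neg_one_pow]; ring
    · rw [if_neg hj, if_neg hj, (Nat.not_even_iff_odd.mp hj).neg_one_pow]; ring
  rw [Finset.sum_congr rfl (fun j _ => hterm j), Finset.sum_sub_distrib, hEqZ, sub_self]
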